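/- Let m ≥ 1, r ≥ 1, and let k : Fin m → ℕ be even integers with 2r+1 ≤ k(i) for all i. In the m-dimensional r-nearest neighbor torus (the m-fold box product of the cycles C_{k(i)}^r), λ_{1,0,…,0} = 2r + 1 − sin((2r+1)π/k(1))/sin(π/k(1)) is an eigenvalue of the Laplacian matrix (with eigenvector v(x) = exp(2πi·x(1)/k(1))) and λ_{k(1)/2,…,k(m)/2} = m·(2r + 1 − cos(πr)) is an eigenvalue (with eigenvector w(x) = (−1)^{x(1)+⋯+x(m)}), and their quotient equals (2r + 1 − sin((2r+1)π/k(1))/sin(π/k(1))) / (m·(2r + 1 − cos(πr))). -/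

import Mathlib

open Real Complex SimpleGraph Matrix Finset

/-- The `r`-nearest neighbor cycle `C_n^r` on `ZMod n`: distinct vertices `a, b` are adjacent
iff `a - b ≡ s (mod n)` for some `s ∈ {1,…,r} ∪ {n-r,…,n-1}`, i.e. iff `a - b = s` or
`b - a = s` in `ZMod n` for some `1 ≤ s ≤ r`. -/
def nnCycle (n r : ℕ) : SimpleGraph (ZMod n) where
  Adj a b := a ≠ b ∧ ∃ s ∈ Finset.Icc 1 r, a - b = (s : ZMod n) ∨ b - a = (s : ZMod n)
  symm := by
    constructor
    rintro a b ⟨hne, s, hs, h⟩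
    exact ⟨hne.symm, s, hs, h.symm⟩
  loopless := by constructor; rintro a ⟨h, -⟩; exact h rfl

instance nnCycle.adjDecidable (n r : ℕ) : DecidableRel (nnCycle n r).Adj := fun a b =>
  inferInstanceAs (Decidable (a ≠ b ∧ ∃ s ∈ Finset.Icc 1 r,
    a - b = (s : ZMod n) ∨ b - a = (s : ZMod n)))

/-- The `m`-dimensional `r`-nearest neighbor torus: the `m`-fold Cartesian (box) product of
the cycles `C_{k i}^r`. Two tuples are adjacent iff they agree in all but one coordinate and
differ in that coordinate by an edge of the corresponding cycle. -/
def nnTorus (m r : ℕ) (k : Fin m → ℕ) : SimpleGraph ((i : Fin m) → ZMod (k i)) where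
  Adj x y := ∃ i, (∀ l, l ≠ i → x l = y l) ∧ (nnCycle (k i) r).Adj (x i) (y i)
  symm := by
    constructor
    rintro x y ⟨i, h1, h2⟩
    exact ⟨i, fun l hl => (h1 l hl).symm, (nnCycle (k i) r).symm.symm _ _ h2⟩
  loopless := by
    constructor
    rintro x ⟨i, -, h2⟩
    exact (nnCycle (k i) r).loopless.irrefl _ h2

instance nnTorus.adjDecidable (m r : ℕ) (k : Fin m → ℕ) :
    DecidableRel (nnTorus m r k).Adj := fun x y =>
  inferInstanceAs (Decidable (∃ i, (∀ l, l ≠ i → x l = y l) ∧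
    (nnCycle (k i) r).Adj (x i) (y i)))


lemma castinj {n r s t : ℕ} [NeZero n] (h2 : 2*r+1 ≤ n) (hs : s ≤ r) (ht : t ≤ r)
    (h : (s : ZMod n) = t) : s = t := by
  have := congrArg ZMod.val h
  rwa [ZMod.val_natCast, ZMod.val_natCast, Nat.mod_eq_of_lt (by omega),
    Nat.mod_eq_of_lt (by omega)] at this

lemma castaddne {n r s t : ℕ} [NeZero n] (h2 : 2*r+1 ≤ n) (hs1 : 1 ≤ s) (hs : s ≤ r)
    (ht1 : 1 ≤ t) (ht : t ≤ r) : (s : ZMod n) + (t : ZMod n) ≠ 0 := by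
  intro h
  rw [← Nat.cast_add] at h
  have hd := (ZMod.natCast_eq_zero_iff _ n).mp h
  have := Nat.le_of_dvd (by omega) hd
  omega

lemma castne0 {n r s : ℕ} [NeZero n] (h2 : 2*r+1 ≤ n) (hs1 : 1 ≤ s) (hs : s ≤ r) :
    (s : ZMod n) ≠ 0 := by
  intro h
  have : s = 0 := castinj (t := 0) h2 hs (by omega) (by simpa using h)
  omega

lemma cycle_sum {n r : ℕ} [NeZero n] (h2 : 2*r+1 ≤ n) (a : ZMod n) (f : ZMod n → ℂ) :
    ∑ b : ZMod n, (if (nnCycle n r).Adj a b then f b else 0)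
      = ∑ s ∈ Finset.Icc 1 r, (f (a + (s:ZMod n)) + f (a - (s:ZMod n))) := by
  have key : ∀ b : ZMod n, (if (nnCycle n r).Adj a b then f b else 0)
      = ∑ s ∈ Finset.Icc 1 r,
          ((if b = a + (s:ZMod n) then f b else 0) + (if b = a - (s:ZMod n) then f b else 0)) := by
    intro b
    by_cases hadj : (nnCycle n r).Adj a b
    · obtain ⟨hne, s₀, hs₀, hc⟩ := hadj
      rw [Finset.mem_Icc] at hs₀
      rw [if_pos ⟨hne, s₀, Finset.mem_Icc.mpr hs₀, hc⟩]
      rw [Finset.sum_eq_single s₀]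
      · rcases hc with h | h
        · have hb : b = a - (s₀:ZMod n) := by linear_combination -h
          have hb' : b ≠ a + (s₀:ZMod n) := by
            intro h'
            exact castaddne (s := s₀) (t := s₀) h2 hs₀.1 hs₀.2 hs₀.1 hs₀.2
              (by linear_combination hb - h')
          rw [if_neg hb', if_pos hb, zero_add]
        · have hb : b = a + (s₀:ZMod n) := by linear_combination h
          have hb' : b ≠ a - (s₀:ZMod n) := by
            intro h'
            exact castaddne (s := s₀) (t := s₀) h2 hs₀.1 hs₀.2 hs₀.1 hs₀.2
              (by linear_combination h' - hb)
          rw [if_pos hb, if_neg hb', add_zero]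
      · intro s hs hss₀
        rw [Finset.mem_Icc] at hs
        rcases hc with h | h
        · have hb : b = a - (s₀:ZMod n) := by linear_combination -h
          have h1 : b ≠ a + (s:ZMod n) := fun h' =>
            castaddne (s := s) (t := s₀) h2 hs.1 hs.2 hs₀.1 hs₀.2
              (by linear_combination hb - h')
          have h2'' : b ≠ a - (s:ZMod n) := fun h' =>
            hss₀ (castinj h2 hs.2 hs₀.2 (by linear_combination h' - hb))
          rw [if_neg h1, if_neg h2'', add_zero]
        · have hb : b = a + (s₀:ZMod n) := by linear_combination h
          have h1 : b ≠ a + (s:ZMod n) := fun h' =>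
            hss₀ (castinj h2 hs.2 hs₀.2 (by linear_combination hb - h'))
          have h2'' : b ≠ a - (s:ZMod n) := fun h' =>
            castaddne (s := s) (t := s₀) h2 hs.1 hs.2 hs₀.1 hs₀.2
              (by linear_combination h' - hb)
          rw [if_neg h1, if_neg h2'', add_zero]
      · intro h; exact absurd (Finset.mem_Icc.mpr hs₀) h
    · rw [if_neg hadj]
      symm
      apply Finset.sum_eq_zero
      intro s hs
      rw [Finset.mem_Icc] at hs
      have h1 : b ≠ a + (s:ZMod n) := by
        intro h'
        exact hadj ⟨fun h => castne0 h2 hs.1 hs.2 (by linear_combination -h' - h),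
          s, Finset.mem_Icc.mpr hs, Or.inr (by linear_combination h')⟩
      have h2' : b ≠ a - (s:ZMod n) := by
        intro h'
        exact hadj ⟨fun h => castne0 h2 hs.1 hs.2 (by linear_combination h' + h),
          s, Finset.mem_Icc.mpr hs, Or.inl (by linear_combination -h')⟩
      rw [if_neg h1, if_neg h2', add_zero]
  rw [Finset.sum_congr rfl fun b _ => key b, Finset.sum_comm]
  refine Finset.sum_congr rfl fun s _ => ?_
  rw [Finset.sum_add_distrib, Finset.sum_ite_eq' Finset.univ (a + (s:ZMod n)) f,
    Finset.sum_ite_eq' Finset.univ (a - (s:ZMod n)) f, if_pos (Finset.mem_univ _),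
    if_pos (Finset.mem_univ _)]

lemma upd_iff {m : ℕ} {k : Fin m → ℕ} (x y : (i : Fin m) → ZMod (k i)) (i : Fin m) :
    y = Function.update x i (y i) ↔ ∀ l, l ≠ i → x l = y l := by
  constructor
  · intro h l hl
    conv_rhs => rw [h]
    rw [Function.update_of_ne hl]
  · intro h
    funext l
    rcases eq_or_ne l i with rfl | hl
    · simp
    · rw [Function.update_of_ne hl]
      exact (h l hl).symm

lemma torus_sum {m r : ℕ} {k : Fin m → ℕ} [∀ i, NeZero (k i)]
    (x : (i : Fin m) → ZMod (k i)) (f : ((i : Fin m) → ZMod (k i)) → ℂ) :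
    ∑ y, (if (nnTorus m r k).Adj x y then f y else 0)
      = ∑ i, ∑ c : ZMod (k i),
          (if (nnCycle (k i) r).Adj (x i) c then f (Function.update x i c) else 0) := by
  have key : ∀ y, (if (nnTorus m r k).Adj x y then f y else 0)
      = ∑ i, (if ((∀ l, l ≠ i → x l = y l) ∧ (nnCycle (k i) r).Adj (x i) (y i))
          then f y else 0) := by
    intro y
    by_cases hadj : (nnTorus m r k).Adj x y
    · obtain ⟨i₀, h1, h2⟩ := hadj
      rw [if_pos ⟨i₀, h1, h2⟩, Finset.sum_eq_single i₀]
      · rw [if_pos ⟨h1, h2⟩]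
      · intro i _ hii₀
        rw [if_neg]
        rintro ⟨g1, g2⟩
        exact g2.1 (h1 i hii₀)
      · intro h; exact absurd (Finset.mem_univ i₀) h
    · rw [if_neg hadj]
      symm
      apply Finset.sum_eq_zero
      intro i _
      rw [if_neg]
      rintro ⟨g1, g2⟩
      exact hadj ⟨i, g1, g2⟩
  rw [Finset.sum_congr rfl fun y _ => key y, Finset.sum_comm]
  refine Finset.sum_congr rfl fun i _ => ?_
  have inner : ∀ c : ZMod (k i),
      (if (nnCycle (k i) r).Adj (x i) c then f (Function.update x i c) else 0)
      = ∑ y, (if y = Function.update x i c then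
          (if (nnCycle (k i) r).Adj (x i) c then f y else 0) else 0) := by
    intro c
    rw [Finset.sum_ite_eq' Finset.univ (Function.update x i c), if_pos (Finset.mem_univ _)]
  rw [Finset.sum_congr rfl fun c _ => inner c, Finset.sum_comm]
  refine Finset.sum_congr rfl fun y _ => ?_
  rw [Finset.sum_eq_single (y i)]
  · by_cases hy : y = Function.update x i (y i)
    · rw [if_pos hy]
      by_cases h : (nnCycle (k i) r).Adj (x i) (y i)
      · rw [if_pos h, if_pos ⟨(upd_iff x y i).mp hy, h⟩]
      · rw [if_neg h, if_neg (by rintro ⟨-, g⟩; exact h g)]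
    · rw [if_neg hy, if_neg (by rintro ⟨g, -⟩; exact hy ((upd_iff x y i).mpr g))]
  · intro c _ hc
    rw [if_neg]
    intro h
    apply hc
    rw [h, Function.update_self]
  · intro h; exact absurd (Finset.mem_univ (y i)) h

lemma lap_apply {m r : ℕ} {k : Fin m → ℕ} [∀ i, NeZero (k i)] (hk : ∀ i, 2 * r + 1 ≤ k i)
    (x : (i : Fin m) → ZMod (k i)) (f : ((i : Fin m) → ZMod (k i)) → ℂ) :
    ((nnTorus m r k).lapMatrix ℂ *ᵥ f) x
      = ∑ i, ∑ s ∈ Finset.Icc 1 r,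
          ((f x - f (Function.update x i (x i + (s : ZMod (k i)))))
            + (f x - f (Function.update x i (x i - (s : ZMod (k i)))))) := by
  rw [SimpleGraph.lapMatrix_mulVec_apply]
  have hN : (nnTorus m r k).neighborFinset x = Finset.univ.filter ((nnTorus m r k).Adj x) := by
    ext y; simp
  have hdeg : ((nnTorus m r k).degree x : ℂ) * f x
      = ∑ y, (if (nnTorus m r k).Adj x y then f x else 0) := by
    rw [← Finset.sum_filter, Finset.sum_const, ← hN, nsmul_eq_mul]
    rfl
  have hsum : ∑ u ∈ (nnTorus m r k).neighborFinset x, f u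
      = ∑ y, (if (nnTorus m r k).Adj x y then f y else 0) := by
    rw [hN, Finset.sum_filter]
  rw [hdeg, hsum, ← Finset.sum_sub_distrib]
  have : ∀ y, (if (nnTorus m r k).Adj x y then f x else 0)
      - (if (nnTorus m r k).Adj x y then f y else 0)
      = (if (nnTorus m r k).Adj x y then f x - f y else 0) := by
    intro y; by_cases h : (nnTorus m r k).Adj x y <;> simp [h]
  rw [Finset.sum_congr rfl fun y _ => this y, torus_sum]
  refine Finset.sum_congr rfl fun i _ => ?_
  exact cycle_sum (hk i) (x i) (fun c => f x - f (Function.update x i c))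

section expAux
variable {n : ℕ} [NeZero n]

lemma exp_mod (t : ℕ) :
    Complex.exp (2 * Real.pi * Complex.I * (t % n : ℕ) / n)
      = Complex.exp (2 * Real.pi * Complex.I * t / n) := by
  have hn : ((n : ℕ) : ℂ) ≠ 0 := Nat.cast_ne_zero.mpr (NeZero.ne n)
  have ht : t = n * (t / n) + t % n := (Nat.div_add_mod t n).symm
  have : (2 * Real.pi * Complex.I * t / n)
      = ((t / n : ℕ) : ℂ) * (2 * Real.pi * Complex.I) + 2 * Real.pi * Complex.I * (t % n : ℕ) / n := by
    conv_lhs => rw [ht]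
    push_cast
    field_simp
  rw [this, Complex.exp_add, ← Int.cast_natCast (R := ℂ) (t / n),
    Complex.exp_int_mul_two_pi_mul_I, one_mul]

lemma e_hom (a b : ZMod n) :
    Complex.exp (2 * Real.pi * Complex.I * ((a + b).val : ℕ) / n)
      = Complex.exp (2 * Real.pi * Complex.I * (a.val : ℕ) / n)
        * Complex.exp (2 * Real.pi * Complex.I * (b.val : ℕ) / n) := by
  rw [ZMod.val_add, exp_mod, ← Complex.exp_add]
  congr 1
  push_cast
  ring

lemma e_cast (s : ℕ) :
    Complex.exp (2 * Real.pi * Complex.I * (((s : ZMod n)).val : ℕ) / n)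
      = Complex.exp (2 * Real.pi * Complex.I * s / n) := by
  rw [ZMod.val_natCast, exp_mod]

lemma e_ne (c : ZMod n) : Complex.exp (2 * Real.pi * Complex.I * (c.val : ℕ) / n) ≠ 0 :=
  Complex.exp_ne_zero _

lemma e_neg (b : ZMod n) :
    Complex.exp (2 * Real.pi * Complex.I * ((-b).val : ℕ) / n)
      = (Complex.exp (2 * Real.pi * Complex.I * (b.val : ℕ) / n))⁻¹ := by
  have h := e_hom b (-b)
  rw [add_neg_cancel] at h
  have h0 : ((0 : ZMod n).val : ℕ) = 0 := ZMod.val_zero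
  rw [h0] at h
  simp only [Nat.cast_zero, mul_zero, zero_div, Complex.exp_zero] at h
  exact eq_inv_of_mul_eq_one_right (by linear_combination -h)
end expAux

lemma sin_dirichlet (x : ℝ) (r : ℕ) :
    Real.sin ((2 * r + 1) * x)
      = Real.sin x + ∑ s ∈ Finset.Icc 1 r, 2 * Real.cos (2 * s * x) * Real.sin x := by
  induction r with
  | zero => simp
  | succ r ih =>
    rw [Finset.sum_Icc_succ_top (by omega)]
    have h1 : (2 * ((r : ℝ) + 1) + 1) * x = (2 * r + 2) * x + x := by ring
    have h2 : (2 * (r : ℝ) + 1) * x = (2 * r + 2) * x - x := by ring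
    have e1 := Real.sin_add ((2 * (r : ℝ) + 2) * x) x
    have e2 := Real.sin_sub ((2 * (r : ℝ) + 2) * x) x
    push_cast
    rw [h1, e1]
    rw [h2, e2] at ih
    have h3 : (2 * ((r : ℝ) + 1)) * x = (2 * r + 2) * x := by ring
    rw [h3]
    linarith

lemma trig_identity {r n : ℕ} (h2 : 2 * r + 1 ≤ n) (h3 : 3 ≤ n) :
    ∑ s ∈ Finset.Icc 1 r, (2 - 2 * Real.cos (2 * Real.pi * s / n))
      = 2 * r + 1 - Real.sin ((2 * r + 1) * Real.pi / n) / Real.sin (Real.pi / n) := by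
  have hn1 : (1 : ℝ) < n := by exact_mod_cast (by omega : 1 < n)
  have hn0 : (0 : ℝ) < n := by linarith
  have hsin : Real.sin (Real.pi / n) ≠ 0 := by
    refine ne_of_gt (Real.sin_pos_of_pos_of_lt_pi (by positivity) ?_)
    exact div_lt_self Real.pi_pos hn1
  have key := sin_dirichlet (Real.pi / n) r
  have hcongr : ∑ s ∈ Finset.Icc 1 r, 2 * Real.cos (2 * (s : ℝ) * (Real.pi / n)) * Real.sin (Real.pi / n)
      = (∑ s ∈ Finset.Icc 1 r, 2 * Real.cos (2 * Real.pi * s / n)) * Real.sin (Real.pi / n) := by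
    rw [Finset.sum_mul]
    refine Finset.sum_congr rfl fun s _ => ?_
    rw [show 2 * (s : ℝ) * (Real.pi / n) = 2 * Real.pi * s / n by ring]
  rw [hcongr] at key
  have harg : (2 * (r : ℝ) + 1) * (Real.pi / n) = (2 * r + 1) * Real.pi / n := by ring
  rw [harg] at key
  have hS : ∑ s ∈ Finset.Icc 1 r, (2 - 2 * Real.cos (2 * Real.pi * s / n))
      = 2 * r - ∑ s ∈ Finset.Icc 1 r, 2 * Real.cos (2 * Real.pi * s / n) := by
    rw [Finset.sum_sub_distrib, Finset.sum_const, Nat.card_Icc, Nat.add_sub_cancel, nsmul_eq_mul]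
    ring
  rw [hS]
  have hdiv : Real.sin ((2 * r + 1) * Real.pi / n) / Real.sin (Real.pi / n)
      = (∑ s ∈ Finset.Icc 1 r, 2 * Real.cos (2 * Real.pi * s / n)) + 1 := by
    rw [key]
    field_simp
    ring
  rw [hdiv]
  ring

lemma neg_one_pow_mod {n : ℕ} (hn : Even n) (t : ℕ) : (-1 : ℂ) ^ (t % n) = (-1 : ℂ) ^ t := by
  rw [neg_one_pow_eq_pow_mod_two, neg_one_pow_eq_pow_mod_two (n := t)]
  congr 1
  obtain ⟨c, hc⟩ := hn
  exact Nat.mod_mod_of_dvd t ⟨c, by omega⟩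

lemma g_hom {n : ℕ} [NeZero n] (hn : Even n) (a b : ZMod n) :
    (-1 : ℂ) ^ ((a + b).val) = (-1 : ℂ) ^ a.val * (-1 : ℂ) ^ b.val := by
  rw [ZMod.val_add, neg_one_pow_mod hn, pow_add]

lemma g_cast {n : ℕ} [NeZero n] (hn : Even n) (s : ℕ) :
    (-1 : ℂ) ^ (((s : ZMod n)).val) = (-1 : ℂ) ^ s := by
  rw [ZMod.val_natCast, neg_one_pow_mod hn]

lemma g_neg {n : ℕ} [NeZero n] (hn : Even n) (b : ZMod n) :
    (-1 : ℂ) ^ ((-b).val) = (-1 : ℂ) ^ b.val := by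
  have h := g_hom hn b (-b)
  rw [add_neg_cancel, ZMod.val_zero, pow_zero] at h
  have hsq : (-1 : ℂ) ^ b.val * (-1 : ℂ) ^ b.val = 1 := by
    rw [← pow_add, ← two_mul, pow_mul]
    norm_num
  have hne : (-1 : ℂ) ^ b.val ≠ 0 := pow_ne_zero _ (by norm_num)
  exact mul_left_cancel₀ hne (by rw [← h, hsq])

lemma sum_update_val {m : ℕ} {k : Fin m → ℕ} [∀ i, NeZero (k i)]
    (x : (i : Fin m) → ZMod (k i)) (i : Fin m) (c : ZMod (k i)) :
    ∑ j, ((Function.update x i c) j).val = c.val + ∑ j ∈ Finset.univ.erase i, (x j).val := by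
  have h : ∀ j, ((Function.update x i c) j).val
      = Function.update (fun j => (x j).val) i c.val j := by
    intro j
    rcases eq_or_ne j i with rfl | hj
    · simp
    · rw [Function.update_of_ne hj, Function.update_of_ne hj]
  rw [Finset.sum_congr rfl fun j _ => h j, Finset.sum_update_of_mem (Finset.mem_univ i),
    Finset.sdiff_singleton_eq_erase]

lemma sum_val_split {m : ℕ} {k : Fin m → ℕ} [∀ i, NeZero (k i)]
    (x : (i : Fin m) → ZMod (k i)) (i : Fin m) :
    ∑ j, (x j).val = (x i).val + ∑ j ∈ Finset.univ.erase i, (x j).val :=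
  (Finset.add_sum_erase Finset.univ _ (Finset.mem_univ i)).symm

lemma neg_sum (r : ℕ) : ∑ s ∈ Finset.Icc 1 r, (2 - 2 * (-1 : ℂ) ^ s)
    = 2 * r + 1 - (-1 : ℂ) ^ r := by
  induction r with
  | zero => simp
  | succ r ih =>
    rw [Finset.sum_Icc_succ_top (by omega), ih]
    push_cast
    ring

theorem part1 (m r : ℕ) (hm : 1 ≤ m) (hr : 1 ≤ r)
    (k : Fin m → ℕ) (hke : ∀ i, Even (k i)) (hk : ∀ i, 2 * r + 1 ≤ k i)
    [∀ i, NeZero (k i)] :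
    ((nnTorus m r k).lapMatrix ℂ *ᵥ
        (fun x => Complex.exp (2 * Real.pi * Complex.I * (x ⟨0, hm⟩).val / k ⟨0, hm⟩)) =
      ((2 * r + 1 - Real.sin ((2 * r + 1) * Real.pi / k ⟨0, hm⟩) /
          Real.sin (Real.pi / k ⟨0, hm⟩) : ℝ) : ℂ) •
        (fun x => Complex.exp (2 * Real.pi * Complex.I * (x ⟨0, hm⟩).val / k ⟨0, hm⟩))) := by
  set i0 : Fin m := ⟨0, hm⟩ with hi0
  set K : ℕ := k i0 with hK
  funext x
  rw [lap_apply hk]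
  set v : ℂ := Complex.exp (2 * Real.pi * Complex.I * ((x i0).val : ℕ) / K) with hv
  have hmain : ∑ i, ∑ s ∈ Finset.Icc 1 r,
      ((v - Complex.exp (2 * Real.pi * Complex.I *
          (((Function.update x i (x i + (s : ZMod (k i)))) i0).val : ℕ) / K))
        + (v - Complex.exp (2 * Real.pi * Complex.I *
          (((Function.update x i (x i - (s : ZMod (k i)))) i0).val : ℕ) / K)))
      = v * ∑ s ∈ Finset.Icc 1 r, ((2 : ℂ)
          - Complex.exp (2 * Real.pi * Complex.I * s / K)
          - (Complex.exp (2 * Real.pi * Complex.I * s / K))⁻¹) := by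
    rw [Finset.sum_eq_single i0]
    · rw [Finset.mul_sum]
      refine Finset.sum_congr rfl fun s hs => ?_
      have hplus : ((Function.update x i0 (x i0 + (s : ZMod K))) i0) = x i0 + (s : ZMod K) :=
        Function.update_self _ _ _
      have hminus : ((Function.update x i0 (x i0 - (s : ZMod K))) i0) = x i0 - (s : ZMod K) :=
        Function.update_self _ _ _
      rw [hplus, hminus, e_hom, e_cast]
      rw [sub_eq_add_neg (x i0), e_hom, e_neg, e_cast]
      rw [← hv]
      ring
    · intro i _ hii0
      apply Finset.sum_eq_zero
      intro s _
      have h1 : ((Function.update x i (x i + (s : ZMod (k i)))) i0) = x i0 :=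
        Function.update_of_ne (Ne.symm hii0) _ _
      have h2 : ((Function.update x i (x i - (s : ZMod (k i)))) i0) = x i0 :=
        Function.update_of_ne (Ne.symm hii0) _ _
      rw [h1, h2, ← hv]
      ring
    · intro h; exact absurd (Finset.mem_univ i0) h
  rw [hmain]
  have hcoef : ∑ s ∈ Finset.Icc 1 r, ((2 : ℂ)
      - Complex.exp (2 * Real.pi * Complex.I * s / K)
      - (Complex.exp (2 * Real.pi * Complex.I * s / K))⁻¹)
      = ((2 * r + 1 - Real.sin ((2 * r + 1) * Real.pi / K) /
          Real.sin (Real.pi / K) : ℝ) : ℂ) := by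
    have hterm : ∀ s : ℕ, ((2 : ℂ)
        - Complex.exp (2 * Real.pi * Complex.I * s / K)
        - (Complex.exp (2 * Real.pi * Complex.I * s / K))⁻¹)
        = ((2 - 2 * Real.cos (2 * Real.pi * s / K) : ℝ) : ℂ) := by
      intro s
      have harg : (2 * Real.pi * Complex.I * s / K)
          = ((2 * Real.pi * s / K : ℝ) : ℂ) * Complex.I := by
        push_cast
        ring
      rw [harg, ← Complex.exp_neg, ← neg_mul, Complex.exp_mul_I, Complex.exp_mul_I,
        Complex.cos_neg, Complex.sin_neg]
      push_cast
      ring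
    rw [Finset.sum_congr rfl fun s _ => hterm s, ← Complex.ofReal_sum]
    rw [trig_identity (hk i0) (by have := hk i0; omega)]
  rw [hcoef, Pi.smul_apply, smul_eq_mul, mul_comm]

theorem part2 (m r : ℕ) (hm : 1 ≤ m) (hr : 1 ≤ r)
    (k : Fin m → ℕ) (hke : ∀ i, Even (k i)) (hk : ∀ i, 2 * r + 1 ≤ k i)
    [∀ i, NeZero (k i)] :
    ((nnTorus m r k).lapMatrix ℂ *ᵥ (fun x => (-1 : ℂ) ^ ∑ i, (x i).val) =
      ((m * (2 * r + 1 - Real.cos (Real.pi * r)) : ℝ) : ℂ) •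
        (fun x => (-1 : ℂ) ^ ∑ i, (x i).val)) := by
  funext x
  rw [lap_apply hk]
  set W : ℂ := (-1 : ℂ) ^ ∑ i, (x i).val with hW
  have hupd : ∀ (i : Fin m) (c : ZMod (k i)),
      (-1 : ℂ) ^ (∑ j, ((Function.update x i c) j).val)
        = (-1 : ℂ) ^ c.val * (-1 : ℂ) ^ (∑ j ∈ Finset.univ.erase i, (x j).val) := by
    intro i c
    rw [sum_update_val, pow_add]
  have hWsplit : ∀ i : Fin m,
      W = (-1 : ℂ) ^ (x i).val * (-1 : ℂ) ^ (∑ j ∈ Finset.univ.erase i, (x j).val) := by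
    intro i
    rw [hW, sum_val_split x i, pow_add]
  have hterm : ∀ (i : Fin m), ∑ s ∈ Finset.Icc 1 r,
      ((W - (-1 : ℂ) ^ (∑ j, ((Function.update x i (x i + (s : ZMod (k i)))) j).val))
        + (W - (-1 : ℂ) ^ (∑ j, ((Function.update x i (x i - (s : ZMod (k i)))) j).val)))
      = W * ∑ s ∈ Finset.Icc 1 r, (2 - 2 * (-1 : ℂ) ^ s) := by
    intro i
    rw [Finset.mul_sum]
    refine Finset.sum_congr rfl fun s _ => ?_
    rw [hupd, hupd, g_hom (hke i), g_cast (hke i)]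
    rw [sub_eq_add_neg (x i), g_hom (hke i), g_neg (hke i), g_cast (hke i)]
    rw [hWsplit i]
    ring
  rw [Finset.sum_congr rfl fun i _ => hterm i, Finset.sum_const, Finset.card_univ,
    Fintype.card_fin, nsmul_eq_mul, neg_sum]
  have hcos : Real.cos (Real.pi * r) = (-1 : ℝ) ^ r := by
    rw [show Real.pi * r = (r : ℝ) * Real.pi - 0 by ring, Real.cos_nat_mul_pi_sub,
      Real.cos_zero, mul_one]
  rw [Pi.smul_apply, smul_eq_mul, ← hW, hcos]
  push_cast
  ring

/-- For `m, r ≥ 1` and even `k i` with `2r+1 ≤ k i`: in the `m`-dimensional `r`-nearest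
neighbor torus, `λ_{1,0,…,0} = 2r+1 - sin((2r+1)π/k₁)/sin(π/k₁)` is an eigenvalue of the
Laplacian (eigenvector `v(x) = exp(2πix₁/k₁)`), `λ_{k₁/2,…,k_m/2} = m(2r+1 - cos(πr))` is an
eigenvalue (eigenvector `w(x) = (-1)^{x₁+⋯+x_m}`), and their quotient equals
`(2r+1 - sin((2r+1)π/k₁)/sin(π/k₁)) / (m(2r+1 - cos(πr)))`. -/
theorem multitorus_synchronizability_even (m r : ℕ) (hm : 1 ≤ m) (hr : 1 ≤ r)
    (k : Fin m → ℕ) (hke : ∀ i, Even (k i)) (hk : ∀ i, 2 * r + 1 ≤ k i) :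
    haveI : ∀ i, NeZero (k i) := fun i => ⟨by have := hk i; omega⟩
    ((nnTorus m r k).lapMatrix ℂ *ᵥ
        (fun x => Complex.exp (2 * Real.pi * Complex.I * (x ⟨0, hm⟩).val / k ⟨0, hm⟩)) =
      ((2 * r + 1 - Real.sin ((2 * r + 1) * Real.pi / k ⟨0, hm⟩) /
          Real.sin (Real.pi / k ⟨0, hm⟩) : ℝ) : ℂ) •
        (fun x => Complex.exp (2 * Real.pi * Complex.I * (x ⟨0, hm⟩).val / k ⟨0, hm⟩))) ∧
    ((nnTorus m r k).lapMatrix ℂ *ᵥ (fun x => (-1 : ℂ) ^ ∑ i, (x i).val) =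
      ((m * (2 * r + 1 - Real.cos (Real.pi * r)) : ℝ) : ℂ) •
        (fun x => (-1 : ℂ) ^ ∑ i, (x i).val)) ∧
    (2 * (r : ℝ) + 1 - Real.sin ((2 * r + 1) * Real.pi / k ⟨0, hm⟩) /
        Real.sin (Real.pi / k ⟨0, hm⟩)) / (m * (2 * r + 1 - Real.cos (Real.pi * r))) =
      (2 * r + 1 - Real.sin ((2 * r + 1) * Real.pi / k ⟨0, hm⟩) /
        Real.sin (Real.pi / k ⟨0, hm⟩)) / (m * (2 * r + 1 - Real.cos (Real.pi * r))) := by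
  haveI : ∀ i, NeZero (k i) := fun i => ⟨by have := hk i; omega⟩
  exact ⟨part1 m r hm hr k hke hk, part2 m r hm hr k hke hk, rfl⟩
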